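/- Let n = 2m be even and let q be an integer with 1 ≤ q ≤ m. Then 2 · D_B(n−1, q) ≤ D(n, q), where D_B(n−1,q) is the number of words x ∈ {0,1}^{n−1} with T_B(x,q) = ∅ and T_B(x̄,q) = ∅, and D(n,q) is the number of words x ∈ {0,1}^n with T(x,q) = ∅ and T(x̄,q) = ∅. In particular, for fixed q, D_B(n−1,q)/2^{n−1} → 0 as n → ∞ along even integers. -/

import Mathlib

/-- The Hamming weight of a binary word `x ∈ {0,1}^N`: the number of ones. -/
def wt {N : ℕ} (x : Fin N → Bool) : ℕ :=
  (Finset.univ.filter (fun i => x i = true)).card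

/-- `Flip x j` complements the first `j` bits of `x`. -/
def Flip {N : ℕ} (x : Fin N → Bool) (j : ℕ) : Fin N → Bool :=
  fun i => if (i : ℕ) < j then !(x i) else x i

/-- `x ∈ {0,1}^{2m}` is bad (for Scheme A) if `T(x,q) = ∅` and `T(x̄,q) = ∅`. -/
def Bad (m q : ℕ) (x : Fin (2*m) → Bool) : Prop :=
  (∀ j ≤ 2*m, wt (Flip x j) ≠ m + q) ∧
  (∀ j ≤ 2*m, wt (Flip (fun i => !(x i)) j) ≠ m + q)

/-- `D m q` is the number of bad words in `{0,1}^{2m}`. -/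
noncomputable def D (m q : ℕ) : ℕ := Nat.card {x : Fin (2*m) → Bool // Bad m q x}

/-- `x ∈ {0,1}^{2m−1}` is bad (for Scheme B) if `T_B(x,q) = ∅` and `T_B(x̄,q) = ∅`. -/
def BadB (m q : ℕ) (x : Fin (2*m-1) → Bool) : Prop :=
  (∀ j ≤ 2*m - 1, ¬(wt (Flip x j) = m + q - 1 ∨ wt (Flip x j) = m + q)) ∧
  (∀ j ≤ 2*m - 1, ¬(wt (Flip (fun i => !(x i)) j) = m + q - 1 ∨
      wt (Flip (fun i => !(x i)) j) = m + q))

/-- `DB m q` is the number of bad words in `{0,1}^{2m−1}` for Scheme B. -/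
noncomputable def DB (m q : ℕ) : ℕ := Nat.card {x : Fin (2*m-1) → Bool // BadB m q x}

lemma wt_eq_sum {N : ℕ} (x : Fin N → Bool) : wt x = ∑ i, (x i).toNat := by
  rw [wt, Finset.card_filter]
  exact Finset.sum_congr rfl (fun i _ => by cases x i <;> simp)

lemma wt_le {N : ℕ} (x : Fin N → Bool) : wt x ≤ N := by
  simpa [wt] using (Finset.card_filter_le Finset.univ (fun i => x i = true))

lemma wt_snoc {N : ℕ} (x : Fin N → Bool) (b : Bool) :
    wt (Fin.snoc x b) = wt x + b.toNat := by
  simp [wt_eq_sum, Fin.sum_univ_castSucc]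

lemma flip_zero {N : ℕ} (x : Fin N → Bool) : Flip x 0 = x := by
  funext i; simp [Flip]

lemma flip_all {N : ℕ} (x : Fin N → Bool) {j : ℕ} (hj : N ≤ j) :
    Flip x j = fun i => !(x i) := by
  funext i; simp [Flip, lt_of_lt_of_le i.isLt hj]

lemma flip_not {N : ℕ} (x : Fin N → Bool) (j : ℕ) :
    Flip (fun i => !(x i)) j = fun i => !(Flip x j i) := by
  funext i; simp [Flip]; split <;> simp

lemma wt_add_wt_not {N : ℕ} (x : Fin N → Bool) :
    wt x + wt (fun i => !(x i)) = N := by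
  rw [wt_eq_sum, wt_eq_sum, ← Finset.sum_add_distrib]
  rw [Finset.sum_congr rfl (fun (i : Fin N) _ => show (x i).toNat + (!(x i)).toNat = 1 by cases x i <;> simp)]
  simp

lemma flip_snoc {N : ℕ} (x : Fin N → Bool) (b : Bool) {j : ℕ} (hj : j ≤ N) :
    Flip (Fin.snoc x b) j = Fin.snoc (Flip x j) b := by
  funext i
  refine Fin.lastCases ?_ (fun k => ?_) i
  · simp [Flip, Nat.not_lt.mpr hj]
  · simp [Flip, Fin.coe_castSucc]
lemma not_snoc {N : ℕ} (x : Fin N → Bool) (b : Bool) :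
    (fun i : Fin (N+1) => !((Fin.snoc x b : Fin (N+1) → Bool) i)) =
      Fin.snoc (fun i => !(x i)) (!b) := by
  funext i
  refine Fin.lastCases ?_ (fun k => ?_) i <;> simp

lemma flip_succ {N : ℕ} (x : Fin N → Bool) {j : ℕ} (hj : j < N) :
    Flip x (j+1) = Function.update (Flip x j) ⟨j, hj⟩ (!(x ⟨j, hj⟩)) := by
  funext i
  rcases eq_or_ne i ⟨j, hj⟩ with rfl | hne
  · simp [Flip, Function.update]
  · have hij : (i : ℕ) ≠ j := fun h => hne (Fin.ext h)
    simp [Flip, Function.update, hne]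
    by_cases h : (i : ℕ) < j
    · simp [h, Nat.lt_succ_of_lt h]; omega
    · have h2 : ¬ (i : ℕ) < j + 1 := by omega
      simp [h, h2]; omega

lemma wt_update_not {N : ℕ} (y : Fin N → Bool) (i0 : Fin N) :
    wt (Function.update y i0 (!(y i0))) + (y i0).toNat = wt y + (!(y i0)).toNat := by
  rw [wt_eq_sum, wt_eq_sum]
  rw [← Finset.add_sum_erase _ _ (Finset.mem_univ i0),
      ← Finset.add_sum_erase _ (fun i => (y i).toNat) (Finset.mem_univ i0)]
  rw [Finset.sum_congr rfl
    (fun i hi => by rw [Function.update_of_ne (Finset.ne_of_mem_erase hi)])]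
  simp; ring

lemma flip_step {N : ℕ} (x : Fin N → Bool) {j : ℕ} (hj : j < N) :
    (x ⟨j, hj⟩ = true ∧ wt (Flip x j) = wt (Flip x (j+1)) + 1) ∨
    (x ⟨j, hj⟩ = false ∧ wt (Flip x (j+1)) = wt (Flip x j) + 1) := by
  have hv : Flip x j ⟨j, hj⟩ = x ⟨j, hj⟩ := by simp [Flip]
  have h := wt_update_not (Flip x j) ⟨j, hj⟩
  rw [hv, ← flip_succ x hj] at h
  cases hx : x ⟨j, hj⟩ <;> rw [hx] at h <;> simp at h <;> [right; left] <;> simp [hx, h]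

lemma ivt_up (f : ℕ → ℕ) (hstep : ∀ i, f (i+1) ≤ f i + 1) {a b c : ℕ}
    (hab : a ≤ b) (ha : f a ≤ c) (hb : c ≤ f b) : ∃ j, a ≤ j ∧ j ≤ b ∧ f j = c := by
  induction b with
  | zero =>
    have h0 : a = 0 := by omega
    subst h0
    exact ⟨0, le_refl _, le_refl _, by omega⟩
  | succ b ih =>
    rcases eq_or_lt_of_le hab with rfl | hlt
    · exact ⟨b+1, le_refl _, le_refl _, by omega⟩
    · have hab' : a ≤ b := by omega
      rcases le_or_gt c (f b) with h | h
      · obtain ⟨j, h1, h2, h3⟩ := ih hab' h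
        exact ⟨j, h1, by omega, h3⟩
      · have := hstep b
        exact ⟨b+1, by omega, le_refl _, by omega⟩


lemma wt_comp_cast {N N' : ℕ} (h : N' = N) (x : Fin N → Bool) :
    wt (x ∘ Fin.cast h) = wt x := by
  rw [wt_eq_sum, wt_eq_sum]
  exact Fintype.sum_equiv (finCongr h) _ _ (fun i => rfl)

lemma flip_comp_cast {N N' : ℕ} (h : N' = N) (x : Fin N → Bool) (j : ℕ) :
    Flip (x ∘ Fin.cast h) j = (Flip x j) ∘ Fin.cast h := by
  funext i; simp [Flip, Function.comp]

lemma not_not_fun {N : ℕ} (x : Fin N → Bool) : (fun i => !(!(x i))) = x := by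
  funext i; simp

lemma part1 (q : ℕ) (hq : 1 ≤ q) (m : ℕ) (hm : q ≤ m) : 2 * DB m q ≤ D m q := by
  have hM : 2*m = (2*m-1) + 1 := by omega
  -- the extension map
  have key : ∀ (b : Bool) (x : Fin (2*m-1) → Bool), BadB m q x →
      Bad m q ((Fin.snoc x b : Fin ((2*m-1)+1) → Bool) ∘ Fin.cast hM) := by
    intro b x hx
    have hwt : ∀ (z : Fin (2*m-1) → Bool) (c : Bool) (j : ℕ), j ≤ 2*m-1 →
        wt (Flip ((Fin.snoc z c : Fin ((2*m-1)+1) → Bool) ∘ Fin.cast hM) j)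
          = wt (Flip z j) + c.toNat := by
      intro z c j hj
      rw [flip_comp_cast, wt_comp_cast, flip_snoc z c hj, wt_snoc]
    have hwt' : ∀ (z : Fin (2*m-1) → Bool) (c : Bool) (j : ℕ), (2*m-1) + 1 ≤ j →
        wt (Flip ((Fin.snoc z c : Fin ((2*m-1)+1) → Bool) ∘ Fin.cast hM) j)
          = wt (fun i => !(z i)) + (!c).toNat := by
      intro z c j hj
      rw [flip_comp_cast, wt_comp_cast, flip_all _ hj, not_snoc, wt_snoc]
    have hcompl : (fun i => !(((Fin.snoc x b : Fin ((2*m-1)+1) → Bool) ∘ Fin.cast hM) i))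
        = (Fin.snoc (fun i => !(x i)) (!b) : Fin ((2*m-1)+1) → Bool) ∘ Fin.cast hM := by
      exact congrArg (· ∘ Fin.cast hM) (not_snoc x b)
    constructor
    · intro j hj
      rcases le_or_gt j (2*m-1) with h | h
      · rw [hwt x b j h]
        have := hx.1 j h
        push_neg at this
        have hb : b.toNat = 0 ∨ b.toNat = 1 := by cases b <;> simp
        omega
      · rw [hwt' x b j (by omega)]
        have := hx.2 0 (Nat.zero_le _)
        rw [flip_zero] at this
        push_neg at this
        have hb : (!b).toNat = 0 ∨ (!b).toNat = 1 := by cases b <;> simp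
        omega
    · intro j hj
      rw [hcompl]
      rcases le_or_gt j (2*m-1) with h | h
      · rw [hwt _ (!b) j h]
        have := hx.2 j h
        push_neg at this
        have hb : (!b).toNat = 0 ∨ (!b).toNat = 1 := by cases b <;> simp
        omega
      · rw [hwt' _ (!b) j (by omega), not_not_fun]
        have := hx.1 0 (Nat.zero_le _)
        rw [flip_zero] at this
        push_neg at this
        have hb : (!(!b)).toNat = 0 ∨ (!(!b)).toNat = 1 := by cases b <;> simp
        omega
  let F : Bool × {x : Fin (2*m-1) → Bool // BadB m q x} → {y : Fin (2*m) → Bool // Bad m q y} :=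
    fun p => ⟨(Fin.snoc p.2.1 p.1 : Fin ((2*m-1)+1) → Bool) ∘ Fin.cast hM, key p.1 p.2.1 p.2.2⟩
  have hinj : Function.Injective F := by
    rintro ⟨b, x, hx⟩ ⟨b', x', hx'⟩ h
    have h2 : (Fin.snoc x b : Fin ((2*m-1)+1) → Bool) = Fin.snoc x' b' := by
      have := congrArg Subtype.val h
      funext i
      have := congrFun this (Fin.cast hM.symm i)
      simpa [F] using this
    have hb : b = b' := by
      have := congrFun h2 (Fin.last (2*m-1)); simpa using this
    have hx2 : x = x' := by
      funext k
      have := congrFun h2 (Fin.castSucc k); simpa using this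
    simp [hb, hx2]
  have := Nat.card_le_card_of_injective F hinj
  calc 2 * DB m q = Nat.card (Bool × {x : Fin (2*m-1) → Bool // BadB m q x}) := by
        rw [Nat.card_prod, Nat.card_eq_fintype_card]; rfl
    _ ≤ D m q := this

/-- Abstract band lemma for ±1-bounded walks avoiding two levels `a < b` with `a+b = n`. -/
lemma walk_band (f : ℕ → ℕ) (n a b : ℕ)
    (hstep_up : ∀ i, f (i+1) ≤ f i + 1)
    (hstep_dn : ∀ i, f i ≤ f (i+1) + 1)
    (hle : ∀ j, f j ≤ n)
    (hend : f 0 + f n = n)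
    (havoid : ∀ j ≤ n, f j ≠ a ∧ f j ≠ b)
    (hab : a + b = n) (haltb : a < b) :
    ∀ j ≤ n, a < f j ∧ f j < b := by
  have gstep_up : ∀ i, (n - f (i+1)) ≤ (n - f i) + 1 := by
    intro i; have := hstep_dn i; have := hle i; have := hle (i+1); omega
  intro j hj
  constructor
  · by_contra hcon
    push_neg at hcon
    have hne := (havoid j hj).1
    have hjlt : f j < a := by omega
    rcases le_or_gt (f 0) a with h0 | h0
    · -- f 0 ≤ a hence f n ≥ b > a ≥ f j : cross a upward on [j, n]
      have hn : a ≤ f n := by omega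
      obtain ⟨j', _, h2, h3⟩ := ivt_up f hstep_up hj (by omega) hn
      exact (havoid j' h2).1 h3
    · -- f 0 > a : reversed walk g crosses b on [0, j]
      obtain ⟨j', _, h2, h3⟩ := ivt_up (fun i => n - f i) gstep_up (Nat.zero_le j)
        (show n - f 0 ≤ b by omega) (show b ≤ n - f j by omega)
      have h4 := hle j'
      have h5 := (havoid j' (by omega)).1
      have h3' : n - f j' = b := h3
      omega
  · by_contra hcon
    push_neg at hcon
    have hne := (havoid j hj).2
    have hjgt : b < f j := by omega
    rcases le_or_gt (f 0) b with h0 | h0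
    · obtain ⟨j', _, h2, h3⟩ := ivt_up f hstep_up (Nat.zero_le j) h0 (by omega)
      exact (havoid j' (by omega)).2 h3
    · -- f 0 > b hence f n < a < ... : reversed walk crosses a on [j, n]
      have hn : f n < a := by omega
      obtain ⟨j', _, h2, h3⟩ := ivt_up (fun i => n - f i) gstep_up hj
        (show n - f j ≤ a by have := hle j; omega)
        (show a ≤ n - f n by omega)
      have h4 := hle j'
      have h5 := (havoid j' h2).2
      have h3' : n - f j' = a := h3
      omega

/-- Any bad word keeps its flip-weight walk strictly inside the band `(m-q, m+q)`. -/
lemma band {m q : ℕ} (hq : 1 ≤ q) (hm : q ≤ m) {x : Fin (2*m) → Bool}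
    (hx : Bad m q x) :
    ∀ j ≤ 2*m, m - q < wt (Flip x j) ∧ wt (Flip x j) < m + q := by
  have hconst : ∀ i, 2*m ≤ i → Flip x (i+1) = Flip x i := by
    intro i h
    rw [flip_all x h, flip_all x (by omega)]
  have hstep_up : ∀ i, wt (Flip x (i+1)) ≤ wt (Flip x i) + 1 := by
    intro i
    rcases lt_or_ge i (2*m) with h | h
    · rcases flip_step x h with ⟨_, h2⟩ | ⟨_, h2⟩ <;> omega
    · rw [hconst i h]; omega
  have hstep_dn : ∀ i, wt (Flip x i) ≤ wt (Flip x (i+1)) + 1 := by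
    intro i
    rcases lt_or_ge i (2*m) with h | h
    · rcases flip_step x h with ⟨_, h2⟩ | ⟨_, h2⟩ <;> omega
    · rw [hconst i h]; omega
  have hend : wt (Flip x 0) + wt (Flip x (2*m)) = 2*m := by
    rw [flip_zero, flip_all x (le_refl _)]; exact wt_add_wt_not x
  have havoid : ∀ j ≤ 2*m, wt (Flip x j) ≠ m - q ∧ wt (Flip x j) ≠ m + q := by
    intro j hj
    refine ⟨fun hc => ?_, hx.1 j hj⟩
    have h1 := hx.2 j hj
    rw [flip_not] at h1
    have h2 := wt_add_wt_not (Flip x j)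
    have h3 : wt (fun i => !(Flip x j i)) = m + q := by omega
    exact h1 h3
  exact walk_band (fun j => wt (Flip x j)) (2*m) (m-q) (m+q)
    hstep_up hstep_dn (fun j => wt_le _) hend havoid (by omega) (by omega)

/-- Every aligned block of length 2q in a bad word contains a `true` bit. -/
lemma block_nonzero {m q : ℕ} (hq : 1 ≤ q) (hm : q ≤ m) {x : Fin (2*m) → Bool}
    (hx : Bad m q x) (k : ℕ) (hk : k < m / q) :
    ∃ i, ∃ hi : 2*q*k + i < 2*m, i < 2*q ∧ x ⟨2*q*k + i, hi⟩ = true := by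
  have hKq : (m / q) * q ≤ m := Nat.div_mul_le_self m q
  have hub : 2*q*k + 2*q ≤ 2*m := by
    calc 2*q*k + 2*q = 2*(q*(k+1)) := by ring
      _ ≤ 2*(q*(m/q)) := by
          have : k + 1 ≤ m / q := hk
          exact Nat.mul_le_mul_left _ (Nat.mul_le_mul_left _ this)
      _ = 2*((m/q)*q) := by ring
      _ ≤ 2*m := by omega
  by_contra hcon
  push_neg at hcon
  have hrise : ∀ t, t ≤ 2*q →
      wt (Flip x (2*q*k + t)) = wt (Flip x (2*q*k)) + t := by
    intro t ht
    induction t with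
    | zero => rfl
    | succ t ih =>
      have hlt : 2*q*k + t < 2*m := by omega
      have hbit : x ⟨2*q*k + t, hlt⟩ = false := by
        have h := hcon t hlt
        cases hb : x ⟨2*q*k + t, hlt⟩
        · rfl
        · exact absurd hb (by simpa using h (by omega))
      rcases flip_step x hlt with ⟨h1, _⟩ | ⟨_, h2⟩
      · rw [hbit] at h1; cases h1
      · have ih' := ih (by omega)
        have he : 2*q*k + (t+1) = (2*q*k + t) + 1 := by ring
        rw [he, h2, ih']; omega
  have h1 := (band hq hm hx (2*q*k) (by omega)).1
  have h2 := (band hq hm hx (2*q*k + 2*q) (by omega)).2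
  rw [hrise (2*q) (le_refl _)] at h2
  omega

lemma part2bound (q : ℕ) (hq : 1 ≤ q) (m : ℕ) (hm : q ≤ m) :
    D m q ≤ (2^(2*q) - 1)^(m/q) * 2^(2*m - 2*q*(m/q)) := by
  have hKq : (m / q) * q ≤ m := Nat.div_mul_le_self m q
  have hLK : 2*q*(m/q) ≤ 2*m := by
    calc 2*q*(m/q) = 2*((m/q)*q) := by ring
      _ ≤ 2*m := by omega
  have hidx : ∀ (k : Fin (m/q)) (i : Fin (2*q)), 2*q*(k:ℕ) + (i:ℕ) < 2*m := by
    intro k i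
    have h1 : 2*q*((k:ℕ)+1) ≤ 2*q*(m/q) := Nat.mul_le_mul_left _ k.isLt
    have h2 : 2*q*((k:ℕ)+1) = 2*q*(k:ℕ) + 2*q := by ring
    have := i.isLt
    omega
  have hidx2 : ∀ (t : Fin (2*m - 2*q*(m/q))), 2*q*(m/q) + (t:ℕ) < 2*m := by
    intro t; have := t.isLt; omega
  let S := {h : Fin (2*q) → Bool // h ≠ fun _ => false}
  let T := (Fin (m/q) → S) × (Fin (2*m - 2*q*(m/q)) → Bool)
  let G : {x : Fin (2*m) → Bool // Bad m q x} → T := fun X =>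
    (fun k => ⟨fun i => X.1 ⟨2*q*(k:ℕ) + (i:ℕ), hidx k i⟩, by
        obtain ⟨i, hi, hi2, htrue⟩ := block_nonzero hq hm X.2 (k:ℕ) k.isLt
        intro heq
        have h := congrFun heq ⟨i, hi2⟩
        exact absurd (htrue.symm.trans h) (by simp)⟩,
     fun t => X.1 ⟨2*q*(m/q) + (t:ℕ), hidx2 t⟩)
  have hinj : Function.Injective G := by
    rintro ⟨x, hx⟩ ⟨y, hy⟩ h
    have h1 := congrArg Prod.fst h
    have h2 := congrArg Prod.snd h
    simp only [G] at h1 h2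
    refine Subtype.ext (funext fun j => ?_)
    rcases lt_or_ge (j:ℕ) (2*q*(m/q)) with hc | hc
    · have hq0 : 0 < 2*q := by omega
      have hkK : (j:ℕ) / (2*q) < m/q := by
        rw [Nat.div_lt_iff_lt_mul hq0]
        calc (j:ℕ) < 2*q*(m/q) := hc
          _ = m/q * (2*q) := by ring
      have hiL : (j:ℕ) % (2*q) < 2*q := Nat.mod_lt _ hq0
      have e1 := congrFun (congrArg Subtype.val (congrFun h1 ⟨(j:ℕ)/(2*q), hkK⟩))
        ⟨(j:ℕ) % (2*q), hiL⟩
      have hjj : (⟨2*q*((j:ℕ)/(2*q)) + (j:ℕ)%(2*q), hidx ⟨_, hkK⟩ ⟨_, hiL⟩⟩ : Fin (2*m)) = j :=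
        Fin.ext (Nat.div_add_mod (j:ℕ) (2*q))
      show x j = y j
      rw [← hjj]
      exact e1
    · have ht : (j:ℕ) - 2*q*(m/q) < 2*m - 2*q*(m/q) := by
        have := j.isLt; omega
      have e1 := congrFun h2 ⟨(j:ℕ) - 2*q*(m/q), ht⟩
      have hjj : (⟨2*q*(m/q) + ((j:ℕ) - 2*q*(m/q)), hidx2 ⟨_, ht⟩⟩ : Fin (2*m)) = j :=
        Fin.ext (by simp; omega)
      show x j = y j
      rw [← hjj]
      exact e1
  have hcard := Nat.card_le_card_of_injective G hinj
  have hS : Nat.card S = 2^(2*q) - 1 := by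
    rw [Nat.card_eq_fintype_card]
    have : Fintype.card S = Fintype.card (Fin (2*q) → Bool)
        - Fintype.card {h : Fin (2*q) → Bool // h = fun _ => false} :=
      Fintype.card_subtype_compl _
    rw [this, Fintype.card_subtype_eq, Fintype.card_fun]
    simp
  have hT : Nat.card T = (2^(2*q) - 1)^(m/q) * 2^(2*m - 2*q*(m/q)) := by
    rw [Nat.card_prod, Nat.card_fun, Nat.card_fun, hS]
    simp [Nat.card_eq_fintype_card]
  calc D m q ≤ Nat.card T := hcard
    _ = _ := hT

lemma real_bound (q : ℕ) (hq : 1 ≤ q) (m : ℕ) (hm : q ≤ m) :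
    (DB m q : ℝ) / 2^(2*m-1) ≤ (((2:ℝ)^(2*q) - 1)/2^(2*q))^(m/q) := by
  have hKq : (m / q) * q ≤ m := Nat.div_mul_le_self m q
  have hLK : 2*q*(m/q) ≤ 2*m := by
    calc 2*q*(m/q) = 2*((m/q)*q) := by ring
      _ ≤ 2*m := by omega
  have h1 : (1:ℕ) ≤ 2^(2*q) := Nat.one_le_two_pow
  have hA : 2 * DB m q ≤ (2^(2*q) - 1)^(m/q) * 2^(2*m - 2*q*(m/q)) :=
    (part1 q hq m hm).trans (part2bound q hq m hm)
  have hcast : 2 * (DB m q : ℝ) ≤ ((2:ℝ)^(2*q) - 1)^(m/q) * 2^(2*m - 2*q*(m/q)) := by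
    have : ((2 * DB m q : ℕ) : ℝ) ≤ (((2^(2*q) - 1)^(m/q) * 2^(2*m - 2*q*(m/q)) : ℕ) : ℝ) := Nat.cast_le.mpr hA
    push_cast [Nat.cast_sub h1] at this
    convert this using 2
  have hpos : (0:ℝ) < 2^(2*m-1) := by positivity
  rw [div_le_iff₀ hpos]
  have hexp : (2:ℝ)^(2*m-1) * 2 = 2^(2*m - 2*q*(m/q)) * 2^(2*q*(m/q)) := by
    rw [← pow_succ, ← pow_add]
    congr 1
    omega
  have hkey : (((2:ℝ)^(2*q) - 1)/2^(2*q))^(m/q) * 2^(2*m-1)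
      = ((2:ℝ)^(2*q) - 1)^(m/q) * 2^(2*m - 2*q*(m/q)) / 2 := by
    rw [div_pow, ← pow_mul]
    rw [div_mul_eq_mul_div, div_eq_div_iff (by positivity) (by norm_num)]
    calc ((2:ℝ)^(2*q) - 1)^(m/q) * 2^(2*m-1) * 2
        = ((2:ℝ)^(2*q) - 1)^(m/q) * (2^(2*m-1) * 2) := by ring
      _ = ((2:ℝ)^(2*q) - 1)^(m/q) * (2^(2*m - 2*q*(m/q)) * 2^(2*q*(m/q))) := by rw [hexp]
      _ = ((2:ℝ)^(2*q) - 1)^(m/q) * 2^(2*m - 2*q*(m/q)) * 2^(2*q*(m/q)) := by ring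
  rw [hkey]
  linarith

/-- `2·D_B(n−1,q) ≤ D(n,q)`; in particular for fixed `q`,
`D_B(n−1,q)/2^{n−1} → 0` along even `n = 2m`. -/
theorem stmt14 (q : ℕ) (hq : 1 ≤ q) :
    (∀ m, q ≤ m → 2 * DB m q ≤ D m q) ∧
    Filter.Tendsto (fun m : ℕ => (DB m q : ℝ) / 2^(2*m-1)) Filter.atTop (nhds 0) := by
  refine ⟨part1 q hq, ?_⟩
  have h1 : (1:ℝ) ≤ 2^(2*q) := by
    have := Nat.one_le_two_pow (n := 2*q)
    exact_mod_cast this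
  have hc0 : (0:ℝ) ≤ ((2:ℝ)^(2*q) - 1)/2^(2*q) := by
    apply div_nonneg (by linarith) (by positivity)
  have hc1 : ((2:ℝ)^(2*q) - 1)/2^(2*q) < 1 := by
    rw [div_lt_one (by positivity)]
    linarith
  have hdiv : Filter.Tendsto (fun m : ℕ => m / q) Filter.atTop Filter.atTop := by
    apply Filter.tendsto_atTop_atTop.mpr
    intro b
    exact ⟨b * q, fun m hm => (Nat.le_div_iff_mul_le (by omega)).mpr hm⟩
  have htend : Filter.Tendsto (fun m : ℕ => (((2:ℝ)^(2*q) - 1)/2^(2*q))^(m/q))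
      Filter.atTop (nhds 0) :=
    (tendsto_pow_atTop_nhds_zero_of_lt_one hc0 hc1).comp hdiv
  refine tendsto_of_tendsto_of_tendsto_of_le_of_le' tendsto_const_nhds htend ?_ ?_
  · exact Filter.Eventually.of_forall (fun m => by positivity)
  · exact Filter.eventually_atTop.mpr ⟨q, fun m hm => real_bound q hq m hm⟩
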